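/- arXiv:2508.01949 — 5 statements merged into one kernel-verified Lean document; each statement's English description precedes it below -/
import Mathlib

section
/- Let S be a left ample subsemigroup of an inverse semigroup T (i.e. ss⁻¹ ∈ S for all s ∈ S). Then the homomorphism ρ̂_S : S → I_S, s ↦ σ_s = ρ_s|_{Tss⁻¹ ∩ S}, is injective. -/
/-- An inverse semigroup: every element `a` has an inverse `a⁻¹`, and it is unique. -/
class InverseSemigroup (T : Type*) extends Semigroup T, Inv T where
  mul_inv_mul : ∀ a : T, a * a⁻¹ * a = a
  inv_mul_inv : ∀ a : T, a⁻¹ * a * a⁻¹ = a⁻¹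
  inv_unique : ∀ {a b : T}, a * b * a = a → b * a * b = b → b = a⁻¹

open scoped Classical

/-- The restriction σ_s = ρ_s|_{Tss⁻¹ ∩ Y} of the Wagner–Preston partial bijection
ρ_s : a ↦ a*s to a subset Y, as a partial map (an element of I_Y). -/
noncomputable def sigmaMap {T : Type*} [InverseSemigroup T] (Y : Set T) (s : T) : T → Option T :=
  fun a => if a ∈ Y ∧ ∃ t : T, a = t * (s * s⁻¹) then some (a * s) else none

/-- Composition of partial maps (the product in a symmetric inverse semigroup). -/
def pcomp {α : Type*} (f g : α → Option α) : α → Option α := fun a => (f a).bind g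

/-- The inverse of a partial map: defined on the image of an injective partial map. -/
noncomputable def pinv {α : Type*} (f : α → Option α) : α → Option α :=
  fun b => if h : ∃ a : α, f a = some b then some h.choose else none

namespace ISGaux
variable {T : Type*} [InverseSemigroup T]

lemma idem_ssinv (s : T) : (s * s⁻¹) * (s * s⁻¹) = s * s⁻¹ := by
  rw [← mul_assoc, InverseSemigroup.mul_inv_mul]

lemma idem_inv {e : T} (he : e * e = e) : e⁻¹ = e :=
  (InverseSemigroup.inv_unique (by rw [he, he]) (by rw [he, he])).symm

lemma inv_invol (a : T) : a⁻¹⁻¹ = a :=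
  (InverseSemigroup.inv_unique (InverseSemigroup.inv_mul_inv a)
    (InverseSemigroup.mul_inv_mul a)).symm

lemma idem_mul_idem {e f : T} (he : e * e = e) (hf : f * f = f) :
    (e * f) * (e * f) = e * f := by
  set x := (e * f)⁻¹ with hxdef
  have he' : ∀ y : T, e * (e * y) = e * y := fun y => by rw [← mul_assoc, he]
  have hf' : ∀ y : T, f * (f * y) = f * y := fun y => by rw [← mul_assoc, hf]
  have hmim : (e * f) * x * (e * f) = e * f := InverseSemigroup.mul_inv_mul (e * f)
  have himi : x * (e * f) * x = x := InverseSemigroup.inv_mul_inv (e * f)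
  have h1 : (e * f) * (f * x * e) * (e * f) = e * f := by
    have := hmim
    simp only [mul_assoc, he', hf'] at this ⊢
    exact this
  have himi' : ∀ y : T, x * (e * (f * (x * y))) = x * y := fun y => by
    calc x * (e * (f * (x * y))) = (x * (e * f) * x) * y := by simp only [mul_assoc]
      _ = x * y := by rw [himi]
  have h2 : (f * x * e) * (e * f) * (f * x * e) = f * x * e := by
    simp only [mul_assoc, he', hf', himi']
  have hx : f * x * e = x := InverseSemigroup.inv_unique h1 h2
  have hxid : x * x = x := by
    conv_lhs => rw [← hx]
    calc (f * x * e) * (f * x * e) = f * (x * (e * f) * x) * e := by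
          simp only [mul_assoc]
      _ = f * x * e := by rw [himi]
      _ = x := hx
  have hefx : e * f = x := (inv_invol (e * f)).symm.trans (idem_inv hxid)
  rw [hefx]; exact hxid

lemma idem_comm {e f : T} (he : e * e = e) (hf : f * f = f) : e * f = f * e := by
  have he' : ∀ y : T, e * (e * y) = e * y := fun y => by rw [← mul_assoc, he]
  have hf' : ∀ y : T, f * (f * y) = f * y := fun y => by rw [← mul_assoc, hf]
  have hef := idem_mul_idem he hf
  have hfe := idem_mul_idem hf he
  have h1 : (e * f) * (f * e) * (e * f) = e * f := by
    have := hef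
    simp only [mul_assoc] at this ⊢
    simp only [he', hf']
    exact this
  have h2 : (f * e) * (e * f) * (f * e) = f * e := by
    have := hfe
    simp only [mul_assoc] at this ⊢
    simp only [he', hf']
    exact this
  have := InverseSemigroup.inv_unique h1 h2
  rw [idem_inv hef] at this
  exact this.symm

end ISGaux

/-- If S is left ample in T (ss⁻¹ ∈ S for all s ∈ S), then ρ̂_S : s ↦ σ_s = ρ_s|_{Tss⁻¹ ∩ S}
is injective on S. -/
theorem stmt7 {T : Type*} [InverseSemigroup T] (S : Subsemigroup T)
    (hla : ∀ s ∈ S, s * s⁻¹ ∈ S) :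
    Set.InjOn (fun s => sigmaMap (S : Set T) s) (S : Set T) := by
  intro s hs u hu h
  simp only at h
  -- key extraction: evaluate at a * a⁻¹ for a ∈ {s, u}
  have key : ∀ v w : T, v ∈ S → sigmaMap (S : Set T) v = sigmaMap (S : Set T) w →
      (v * v⁻¹) * w = v ∧ ∃ t : T, v * v⁻¹ = t * (w * w⁻¹) := by
    intro v w hv hvw
    have h1 := congrFun hvw (v * v⁻¹)
    have hcond : (v * v⁻¹) ∈ (S : Set T) ∧ ∃ t : T, v * v⁻¹ = t * (v * v⁻¹) :=
      ⟨hla v hv, ⟨v * v⁻¹, (ISGaux.idem_ssinv v).symm⟩⟩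
    rw [sigmaMap, sigmaMap] at h1
    simp only [if_pos hcond] at h1
    rw [InverseSemigroup.mul_inv_mul] at h1
    split_ifs at h1 with hc
    exact ⟨(Option.some_injective _ h1).symm, hc.2⟩
  obtain ⟨hsu, t1, ht1⟩ := key s u hs h
  obtain ⟨hus, t2, ht2⟩ := key u s hu h.symm
  -- s*s⁻¹ and u*u⁻¹ are equal idempotents
  have hes := ISGaux.idem_ssinv s
  have heu := ISGaux.idem_ssinv u
  have h3 : (s * s⁻¹) * (u * u⁻¹) = s * s⁻¹ := by
    rw [ht1, mul_assoc, heu]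
  have h4 : (u * u⁻¹) * (s * s⁻¹) = u * u⁻¹ := by
    rw [ht2, mul_assoc, hes]
  have heq : s * s⁻¹ = u * u⁻¹ := by
    rw [← h3, ISGaux.idem_comm hes heu, h4]
  calc s = (s * s⁻¹) * u := hsu.symm
    _ = (u * u⁻¹) * u := by rw [heq]
    _ = u := by rw [InverseSemigroup.mul_inv_mul]
end

section
/- Let S be a left ample subsemigroup of an inverse semigroup T and let ρ̂_S : S → I_S, s ↦ σ_s, be as above. Then for every x ∈ S, the image of xx⁻¹ under ρ̂_S equals σ_x σ_x⁻¹ in I_S; in particular σ_x σ_x⁻¹ lies in the image of ρ̂_S, so the image of ρ̂_S is left ample in I_S. -/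
open scoped Classical

lemma e_idem {T : Type*} [InverseSemigroup T] (x : T) :
    (x * x⁻¹) * (x * x⁻¹) = x * x⁻¹ := by
  rw [← mul_assoc, InverseSemigroup.mul_inv_mul x]

lemma e_inv {T : Type*} [InverseSemigroup T] (x : T) :
    (x * x⁻¹)⁻¹ = x * x⁻¹ := by
  have h : (x * x⁻¹) * (x * x⁻¹) * (x * x⁻¹) = x * x⁻¹ := by
    rw [e_idem, e_idem]
  exact (InverseSemigroup.inv_unique h h).symm

/-- If S is left ample in T then for every x ∈ S, the image of xx⁻¹ under ρ̂_S equals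
σ_x σ_x⁻¹ in I_S; in particular σ_x σ_x⁻¹ lies in the image of ρ̂_S, so the image of ρ̂_S
is left ample in I_S. -/
theorem stmt9 {T : Type*} [InverseSemigroup T] (S : Subsemigroup T)
    (hla : ∀ s ∈ S, s * s⁻¹ ∈ S) (x : T) (hx : x ∈ S) :
    sigmaMap (S : Set T) (x * x⁻¹) =
      pcomp (sigmaMap (S : Set T) x) (pinv (sigmaMap (S : Set T) x)) ∧
    ∃ s ∈ S, pcomp (sigmaMap (S : Set T) x) (pinv (sigmaMap (S : Set T) x)) =
      sigmaMap (S : Set T) s := by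
  have hde : (x * x⁻¹) * (x * x⁻¹)⁻¹ = x * x⁻¹ := by rw [e_inv, e_idem]
  have hfix : ∀ a : T, (∃ t : T, a = t * (x * x⁻¹)) → a * (x * x⁻¹) = a := by
    rintro a ⟨t, rfl⟩
    rw [mul_assoc, e_idem]
  have key : sigmaMap (S : Set T) (x * x⁻¹) =
      pcomp (sigmaMap (S : Set T) x) (pinv (sigmaMap (S : Set T) x)) := by
    funext a
    by_cases h : a ∈ (S : Set T) ∧ ∃ t : T, a = t * (x * x⁻¹)
    · have hsx : sigmaMap (S : Set T) x a = some (a * x) := by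
        rw [sigmaMap, if_pos h]
      have hex : ∃ a' : T, sigmaMap (S : Set T) x a' = some (a * x) := ⟨a, hsx⟩
      have hch := hex.choose_spec
      have hchd : Exists.choose hex ∈ (S : Set T) ∧
          (∃ t : T, Exists.choose hex = t * (x * x⁻¹)) := by
        by_contra hc
        rw [sigmaMap] at hch
        simp only [if_neg hc] at hch
        exact Option.some_ne_none _ hch.symm
      have hch2 : Exists.choose hex * x = a * x := by
        rw [sigmaMap, if_pos hchd] at hch
        exact Option.some.inj hch
      have hcheq : Exists.choose hex = a := by
        have h1 : Exists.choose hex * (x * x⁻¹) = a * (x * x⁻¹) := by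
          rw [← mul_assoc, ← mul_assoc, hch2]
        rwa [hfix _ hchd.2, hfix _ h.2] at h1
      show sigmaMap (S : Set T) (x * x⁻¹) a
          = pcomp (sigmaMap (S : Set T) x) (pinv (sigmaMap (S : Set T) x)) a
      rw [sigmaMap]
      simp only [hde]
      rw [if_pos h, pcomp, hsx]
      show some (a * (x * x⁻¹)) = pinv (sigmaMap (S : Set T) x) (a * x)
      rw [pinv, dif_pos hex, hcheq, hfix a h.2]
    · show sigmaMap (S : Set T) (x * x⁻¹) a
          = pcomp (sigmaMap (S : Set T) x) (pinv (sigmaMap (S : Set T) x)) a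
      rw [sigmaMap]
      simp only [hde]
      rw [if_neg h, pcomp, sigmaMap]
      simp only [if_neg h]
      rfl
  exact ⟨key, x * x⁻¹, hla x hx, key.symm⟩
end

section
/- Every left ample semigroup U embeds into the symmetric inverse semigroup I_U via the map x ↦ σ'_x, where σ'_x : Ux⁺ → Ux is defined by z ↦ zx (here x⁺ = xx⁻¹ computed in an associated inverse semigroup), and the image of this embedding is left ample in I_U. -/
namespace ISG
variable {T : Type*} [InverseSemigroup T]

lemma mim (a : T) : a * a⁻¹ * a = a := InverseSemigroup.mul_inv_mul a
lemma imi (a : T) : a⁻¹ * a * a⁻¹ = a⁻¹ := InverseSemigroup.inv_mul_inv a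

lemma idem_inv {e : T} (he : e * e = e) : e⁻¹ = e :=
  (InverseSemigroup.inv_unique (by rw [he, he]) (by rw [he, he])).symm

lemma mi_idem (a : T) : (a * a⁻¹) * (a * a⁻¹) = a * a⁻¹ := by
  rw [← mul_assoc, mim]

lemma im_idem (a : T) : (a⁻¹ * a) * (a⁻¹ * a) = a⁻¹ * a := by
  rw [← mul_assoc, imi]

lemma idem_mul_idem {e f : T} (he : e * e = e) (hf : f * f = f) :
    (e * f) * (e * f) = e * f := by
  set g := (e * f)⁻¹ with hg
  have he' : ∀ x : T, e * (e * x) = e * x := fun x => by rw [← mul_assoc, he]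
  have hf' : ∀ x : T, f * (f * x) = f * x := fun x => by rw [← mul_assoc, hf]
  have h1 : e * (f * (g * (e * f))) = e * f := by
    have := mim (e * f); simpa [mul_assoc] using this
  have h2 : g * (e * (f * g)) = g := by
    have := imi (e * f); simpa [mul_assoc] using this
  have h2' : g * (e * (f * (g * e))) = g * e := by
    have := congrArg (· * e) h2; simpa [mul_assoc] using this
  have hA : f * (g * e) = g := by
    refine InverseSemigroup.inv_unique ?_ ?_
    · show e * f * (f * (g * e)) * (e * f) = e * f
      simp only [mul_assoc, he', hf']
      exact h1
    · show f * (g * e) * (e * f) * (f * (g * e)) = f * (g * e)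
      simp only [mul_assoc, he', hf']
      rw [h2']
  have hgg : g * g = g := by
    conv_lhs => rw [← hA]
    simp only [mul_assoc]
    rw [h2', hA]
  have hginv : g⁻¹ = g := idem_inv hgg
  have hefg : e * f = g := by
    have : e * f = g⁻¹ := by
      refine InverseSemigroup.inv_unique ?_ ?_
      · simp only [mul_assoc]; simpa [mul_assoc] using h2
      · have := mim (e * f); simpa [mul_assoc] using this
    rw [this, hginv]
  rw [hefg, hgg]

lemma idem_comm {e f : T} (he : e * e = e) (hf : f * f = f) :
    e * f = f * e := by
  have hef := idem_mul_idem he hf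
  have hfe := idem_mul_idem hf he
  have : f * e = (e * f)⁻¹ := by
    refine InverseSemigroup.inv_unique ?_ ?_
    · calc e * f * (f * e) * (e * f) = e * (f * f) * (e * e) * f := by
            simp only [mul_assoc]
        _ = (e * f) * (e * f) := by rw [hf, he]; simp only [mul_assoc]
        _ = e * f := hef
    · calc f * e * (e * f) * (f * e) = f * (e * e) * (f * f) * e := by
            simp only [mul_assoc]
        _ = (f * e) * (f * e) := by rw [hf, he]; simp only [mul_assoc]
        _ = f * e := hfe
  rw [this, idem_inv hef]

lemma mul_inv_rev (a b : T) : (a * b)⁻¹ = b⁻¹ * a⁻¹ := by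
  have hc := idem_comm (im_idem a) (mi_idem b)
  refine (InverseSemigroup.inv_unique ?_ ?_).symm
  · calc a * b * (b⁻¹ * a⁻¹) * (a * b)
        = a * ((b * b⁻¹) * (a⁻¹ * a)) * b := by simp only [mul_assoc]
      _ = a * ((a⁻¹ * a) * (b * b⁻¹)) * b := by rw [hc]
      _ = (a * a⁻¹ * a) * (b * b⁻¹ * b) := by simp only [mul_assoc]
      _ = a * b := by rw [mim, mim]
  · calc b⁻¹ * a⁻¹ * (a * b) * (b⁻¹ * a⁻¹)
        = b⁻¹ * ((a⁻¹ * a) * (b * b⁻¹)) * a⁻¹ := by simp only [mul_assoc]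
      _ = b⁻¹ * ((b * b⁻¹) * (a⁻¹ * a)) * a⁻¹ := by rw [hc]
      _ = (b⁻¹ * b * b⁻¹) * (a⁻¹ * a * a⁻¹) := by simp only [mul_assoc]
      _ = b⁻¹ * a⁻¹ := by rw [imi, imi]


lemma dom_split (w a b : T) :
    w * (a * b * (a * b)⁻¹) = w ↔
      w * (a * a⁻¹) = w ∧ (w * a) * (b * b⁻¹) = w * a := by
  rw [mul_inv_rev]
  constructor
  · intro h
    have h' : w * (a * (b * (b⁻¹ * a⁻¹))) = w := by simpa [mul_assoc] using h
    have ha : w * (a * a⁻¹) = w := by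
      conv_lhs => rw [← h']
      calc w * (a * (b * (b⁻¹ * a⁻¹))) * (a * a⁻¹)
          = w * (a * (b * (b⁻¹ * (a⁻¹ * a * a⁻¹)))) := by simp only [mul_assoc]
        _ = w * (a * (b * (b⁻¹ * a⁻¹))) := by rw [imi]
        _ = w := h'
    have hwa : w * a = w * a * (b * b⁻¹) * (a⁻¹ * a) := by
      conv_lhs => rw [← h']
      simp only [mul_assoc]
    refine ⟨ha, ?_⟩
    have hc := idem_comm (im_idem a) (mi_idem b)
    calc w * a * (b * b⁻¹)
        = w * a * (b * b⁻¹) * (a⁻¹ * a) * (b * b⁻¹) := by rw [← hwa]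
      _ = w * a * (b * b⁻¹) * ((a⁻¹ * a) * (b * b⁻¹)) := by simp only [mul_assoc]
      _ = w * a * (b * b⁻¹) * ((b * b⁻¹) * (a⁻¹ * a)) := by rw [hc]
      _ = w * a * ((b * b⁻¹) * (b * b⁻¹)) * (a⁻¹ * a) := by simp only [mul_assoc]
      _ = w * a * (b * b⁻¹) * (a⁻¹ * a) := by rw [mi_idem]
      _ = w * a := hwa.symm
  · rintro ⟨ha, hb⟩
    calc w * (a * b * (b⁻¹ * a⁻¹))
        = w * a * (b * b⁻¹) * a⁻¹ := by simp only [mul_assoc]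
      _ = w * a * a⁻¹ := by rw [hb]
      _ = w := by rw [mul_assoc]; exact ha

end ISG

open scoped Classical

/-- The partial map σ'_x : Ux⁺ → Ux, z ↦ zx, where x⁺ is the unary operation of a
left ample semigroup. -/
noncomputable def sigU {U : Type*} [Semigroup U] (plus : U → U) (x : U) : U → Option U :=
  fun z => if ∃ u : U, z = u * plus x then some (z * x) else none

/-- Every left ample semigroup U (with embedding φ into an associated inverse semigroup T and
x⁺ = the preimage of (xφ)(xφ)⁻¹) embeds into the symmetric inverse semigroup I_U via
x ↦ σ'_x : Ux⁺ → Ux, z ↦ zx, and the image of this embedding is left ample in I_U. -/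
theorem stmt10 {U T : Type*} [Semigroup U] [InverseSemigroup T]
    (φ : U →ₙ* T) (hφ : Function.Injective φ) (plus : U → U)
    (hplus : ∀ x : U, φ (plus x) = φ x * (φ x)⁻¹) :
    Function.Injective (sigU plus) ∧
    (∀ x y : U, sigU plus (x * y) = pcomp (sigU plus x) (sigU plus y)) ∧
    (∀ x : U, ∃ y : U, pcomp (sigU plus x) (pinv (sigU plus x)) = sigU plus y) := by
  have hpp : ∀ x : U, plus x * plus x = plus x := fun x => hφ (by
    rw [map_mul, hplus, ISG.mi_idem])
  have hpxx : ∀ x : U, plus x * x = x := fun x => hφ (by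
    rw [map_mul, hplus, ISG.mim])
  have fix_iff : ∀ x z : U, z * plus x = z ↔ φ z * (φ x * (φ x)⁻¹) = φ z := by
    intro x z
    constructor
    · intro h
      rw [← hplus, ← map_mul, h]
    · intro h
      exact hφ (by rw [map_mul, hplus, h])
  have dom_iff : ∀ x z : U, (∃ u : U, z = u * plus x) ↔ z * plus x = z := by
    intro x z
    constructor
    · rintro ⟨u, rfl⟩
      rw [mul_assoc, hpp]
    · intro h
      exact ⟨z, h.symm⟩
  have phi_cancel : ∀ z1 z2 x : U, z1 * plus x = z1 → z2 * plus x = z2 →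
      z1 * x = z2 * x → z1 = z2 := by
    intro z1 z2 x h1 h2 h3
    apply hφ
    have h3' : φ z1 * φ x = φ z2 * φ x := by rw [← map_mul, ← map_mul, h3]
    have h1' := (fix_iff x z1).mp h1
    have h2' := (fix_iff x z2).mp h2
    calc φ z1 = φ z1 * (φ x * (φ x)⁻¹) := h1'.symm
      _ = φ z2 * (φ x * (φ x)⁻¹) := by rw [← mul_assoc, h3', mul_assoc]
      _ = φ z2 := h2'
  refine ⟨?_, ?_, ?_⟩
  · -- injectivity
    intro x y h
    have hx1 : sigU plus x (plus x) = some x := by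
      simp only [sigU]
      rw [if_pos ⟨plus x, (hpp x).symm⟩, hpxx]
    have hy1 : sigU plus y (plus y) = some y := by
      simp only [sigU]
      rw [if_pos ⟨plus y, (hpp y).symm⟩, hpxx]
    rw [h] at hx1
    rw [← h] at hy1
    simp only [sigU] at hx1 hy1
    split_ifs at hx1 hy1 with hc1 hc2
    have hxy : plus x * plus y = plus x := (dom_iff y (plus x)).mp hc1
    have hyx : plus y * plus x = plus y := (dom_iff x (plus y)).mp hc2
    have hcomm : plus x * plus y = plus y * plus x := hφ (by
      rw [map_mul, map_mul, hplus, hplus,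
        ISG.idem_comm (ISG.mi_idem (φ x)) (ISG.mi_idem (φ y))])
    have hpe : plus x = plus y := by rw [← hxy, hcomm, hyx]
    have hv1 : plus x * y = x := Option.some.inj hx1
    have hv2 : plus y * x = y := Option.some.inj hy1
    rw [← hv1, hpe, hpxx, ← hv2]
  · -- multiplicativity
    intro x y
    funext z
    have hCiff : (∃ u : U, z = u * plus (x * y)) ↔
        ((∃ u : U, z = u * plus x) ∧ (∃ u : U, z * x = u * plus y)) := by
      rw [dom_iff, dom_iff, dom_iff, fix_iff, fix_iff, fix_iff, map_mul,
        map_mul]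
      exact ISG.dom_split (φ z) (φ x) (φ y)
    simp only [sigU, pcomp]
    by_cases h2 : ∃ u : U, z = u * plus x
    · rw [if_pos h2]
      by_cases h3 : ∃ u : U, z * x = u * plus y
      · rw [if_pos (hCiff.mpr ⟨h2, h3⟩)]
        show _ = (pure (z * x) : Option U).bind _
        rw [Option.pure_def, Option.bind_some]; simp only [sigU]; rw [if_pos h3, ← mul_assoc]
      · rw [if_neg (fun hC => h3 (hCiff.mp hC).2)]
        show _ = (pure (z * x) : Option U).bind _
        rw [Option.pure_def, Option.bind_some]; simp only [sigU]; rw [if_neg h3]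
    · rw [if_neg h2, if_neg (fun hC => h2 (hCiff.mp hC).1)]
      rfl
  · -- left ample
    intro x
    refine ⟨plus x, ?_⟩
    have hppx : plus (plus x) = plus x := hφ (by
      rw [hplus, hplus, ISG.idem_inv (ISG.mi_idem (φ x)), ISG.mi_idem])
    have hinj : ∀ z1 z2 w : U, sigU plus x z1 = some w → sigU plus x z2 = some w →
        z1 = z2 := by
      intro z1 z2 w e1 e2
      simp only [sigU] at e1 e2
      split_ifs at e1 e2 with hc1 hc2
      exact phi_cancel z1 z2 x ((dom_iff x z1).mp hc1) ((dom_iff x z2).mp hc2)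
        (by rw [Option.some.inj e1, Option.some.inj e2])
    funext z
    by_cases h2 : ∃ u : U, z = u * plus x
    · have hz : z * plus x = z := (dom_iff x z).mp h2
      have hsz : sigU plus x z = some (z * x) := by
        simp only [sigU]; rw [if_pos h2]
      have hex : ∃ a : U, sigU plus x a = some (z * x) := ⟨z, hsz⟩
      have hch : hex.choose = z := hinj _ _ _ hex.choose_spec hsz
      show (sigU plus x z).bind (pinv (sigU plus x)) = _
      rw [hsz, Option.bind_some]
      simp only [pinv]
      rw [dif_pos hex, hch]
      simp only [sigU]
      rw [hppx, if_pos h2, hz]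
    · have hsz : sigU plus x z = none := by
        simp only [sigU]; rw [if_neg h2]
      show (sigU plus x z).bind (pinv (sigU plus x)) = _
      rw [hsz, Option.bind_none]
      simp only [sigU]
      rw [hppx, if_neg h2]
end

section
/- Let B = (I × G × I) ∪ {0} be a Brandt semigroup with I = {1,2,3}, G a group, and S = ({1,2} × G × I) ∪ {0}. Then S is a subsemigroup of B that is left ample in B but not right ample in B. -/
/-- The Brandt semigroup B = (I × G × I) ∪ {0}; `none` is the zero element. -/
abbrev Brandt (I G : Type*) := Option (I × G × I)

/-- Brandt semigroup multiplication: (i,a,j)(k,b,l) = (i,ab,l) if j = k, else 0;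
0 is absorbing. -/
def bmul {I G : Type*} [DecidableEq I] [Mul G] : Brandt I G → Brandt I G → Brandt I G
  | some (i, a, j), some (k, b, l) => if j = k then some (i, a * b, l) else none
  | _, _ => none

/-- Inversion in a Brandt semigroup: (i,g,j)⁻¹ = (j,g⁻¹,i), 0⁻¹ = 0. -/
def binv {I G : Type*} [Inv G] : Brandt I G → Brandt I G
  | some (i, g, j) => some (j, g⁻¹, i)
  | none => none

/-- The subsemigroup S = ({1,2} × G × I) ∪ {0} of B = (I × G × I) ∪ {0} with I = {1,2,3}
(realized as Fin 3, excluding first coordinate 2). -/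
def S14 (G : Type*) : Set (Brandt (Fin 3) G) :=
  {b | b = none ∨ ∃ i g j, b = some (i, g, j) ∧ i ≠ 2}

/-- S = ({1,2} × G × I) ∪ {0} is a subsemigroup of B which is left ample but not right
ample in B. -/
theorem stmt14 {G : Type*} [Group G] :
    (∀ u ∈ S14 G, ∀ v ∈ S14 G, bmul u v ∈ S14 G) ∧
    (∀ s ∈ S14 G, bmul s (binv s) ∈ S14 G) ∧
    (∃ s ∈ S14 G, bmul (binv s) s ∉ S14 G) := by
  refine ⟨?_, ?_, ?_⟩
  · rintro u (rfl | ⟨i, g, j, rfl, hi⟩) v hv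
    · exact Or.inl rfl
    · rcases hv with rfl | ⟨k, h, l, rfl, hk⟩
      · exact Or.inl rfl
      · simp only [bmul]
        split
        · exact Or.inr ⟨i, g * h, l, rfl, hi⟩
        · exact Or.inl rfl
  · rintro s (rfl | ⟨i, g, j, rfl, hi⟩)
    · exact Or.inl rfl
    · simp only [bmul, binv, if_pos rfl]
      exact Or.inr ⟨i, g * g⁻¹, i, rfl, hi⟩
  · refine ⟨some (0, 1, 2), Or.inr ⟨0, 1, 2, rfl, by decide⟩, ?_⟩
    simp only [bmul, binv, if_pos rfl]
    rintro (h | ⟨i, g, j, h, hi⟩)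
    · simp at h
    · simp only [if_true, Option.some.injEq, Prod.mk.injEq] at h
      exact hi h.1.symm
end

section
/- Let T = Q⁺ be the multiplicative monoid of positive rationals and S = {n ∈ ℕ : n ≥ 2} its subsemigroup. Then for any monoid W and any pair of monoid homomorphisms α, β : Q⁺ → W agreeing on S, α = β; in particular Dom_T(S) = T. -/
/-- The multiplicative monoid (in fact group) Q⁺ of positive rationals. -/
abbrev Qpos : Type := {q : ℚ // 0 < q}

/-- The natural number n ≥ 2 viewed as an element of Q⁺. -/
def npos (n : ℕ) (hn : 2 ≤ n) : Qpos :=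
  ⟨(n : ℚ), by exact_mod_cast lt_of_lt_of_le two_pos hn⟩

/-- The dominion (with respect to monoid homomorphisms into monoids) of a subset S of Q⁺. -/
def dominionM (S : Set Qpos) : Set Qpos :=
  {d | ∀ (W : Type) [Monoid W] (f g : Qpos →* W), (∀ s ∈ S, f s = g s) → f d = g d}

lemma inv_agree {G W : Type} [Group G] [Monoid W] (f g : G →* W) (x : G)
    (h : f x = g x) : f x⁻¹ = g x⁻¹ := by
  have h1 : f x⁻¹ * g x = 1 := by rw [← h, ← map_mul, inv_mul_cancel, map_one]
  have h2 : g x * g x⁻¹ = 1 := by rw [← map_mul, mul_inv_cancel, map_one]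
  calc f x⁻¹ = f x⁻¹ * (g x * g x⁻¹) := by rw [h2, mul_one]
    _ = (f x⁻¹ * g x) * g x⁻¹ := by rw [mul_assoc]
    _ = g x⁻¹ := by rw [h1, one_mul]

lemma qpos_decomp (q : Qpos) :
    ∃ (a b : ℕ) (ha : 2 ≤ a) (hb : 2 ≤ b), q = npos a ha * (npos b hb)⁻¹ := by
  have hnum : 0 < q.1.num := Rat.num_pos.2 q.2
  set a := q.1.num.toNat with hadef
  have ha1 : 1 ≤ a := by omega
  have hb1 : 1 ≤ q.1.den := q.1.pos
  refine ⟨2 * a, 2 * q.1.den, by omega, by omega, ?_⟩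
  apply Subtype.ext
  show q.1 = ((2 * a : ℕ) : ℚ) * (((2 * q.1.den : ℕ) : ℚ))⁻¹
  have hb0 : ((q.1.den : ℚ)) ≠ 0 := by positivity
  have hanum : (a : ℚ) = (q.1.num : ℚ) := by
    exact_mod_cast congrArg (Int.cast : ℤ → ℚ) (Int.toNat_of_nonneg hnum.le)
  push_cast
  rw [hanum]
  field_simp
  have := Rat.num_div_den q.1
  rw [div_eq_iff hb0] at this
  rw [this]

/-- Any two monoid homomorphisms from Q⁺ into a monoid W that agree on
S = {n ∈ ℕ : n ≥ 2} are equal; in particular Dom_T(S) = T. -/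
theorem stmt18 :
    (∀ (W : Type) [Monoid W] (α β : Qpos →* W),
      (∀ (n : ℕ) (hn : 2 ≤ n), α (npos n hn) = β (npos n hn)) → α = β) ∧
    dominionM {x : Qpos | ∃ (n : ℕ) (hn : 2 ≤ n), x = npos n hn} = Set.univ := by
  have key : ∀ (W : Type) [Monoid W] (α β : Qpos →* W),
      (∀ (n : ℕ) (hn : 2 ≤ n), α (npos n hn) = β (npos n hn)) → α = β := by
    intro W _ α β h
    ext q
    obtain ⟨a, b, ha, hb, rfl⟩ := qpos_decomp q
    rw [map_mul, map_mul, h a ha, inv_agree α β _ (h b hb)]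
  refine ⟨key, ?_⟩
  ext d
  simp only [dominionM, Set.mem_setOf_eq, Set.mem_univ, iff_true]
  intro W _ f g h
  have : f = g := key W f g (fun n hn => h _ ⟨n, hn, rfl⟩)
  rw [this]
end
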